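/- arXiv:1212.4330 — 7 statements merged into one kernel-verified Lean document; each statement's English description precedes it below -/
import Mathlib

section
/- Let X be an indecomposable crossed set, u ∈ X, and T = {x ∈ X | u ▷ x ≠ x}. Then for every t ∈ T there exists t' ∈ T with t ▷ t' ≠ t'. -/
/-- A rack structure on a set `X`: a binary operation `act` such that each left
translation is bijective and `act` is self-distributive. -/
structure RackStr (X : Type*) where
  act : X → X → X
  bij : ∀ x, Function.Bijective (act x)
  self_distrib : ∀ x y z, act x (act y z) = act (act x y) (act x z)

namespace RackStr

variable {X : Type*}

/-- A quandle is a rack with `x ▷ x = x`. -/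
def IsQuandle (R : RackStr X) : Prop := ∀ x, R.act x x = x

/-- A crossed set is a quandle in which `x ▷ y = y ↔ y ▷ x = x`. -/
def IsCrossed (R : RackStr X) : Prop :=
  R.IsQuandle ∧ ∀ x y, R.act x y = y ↔ R.act y x = x

/-- The left translation `φ_x` as a permutation. -/
noncomputable def perm (R : RackStr X) (x : X) : Equiv.Perm X :=
  Equiv.ofBijective (R.act x) (R.bij x)

/-- A rack is indecomposable if its inner group (generated by the `φ_x`)
acts transitively. -/
def Indecomposable (R : RackStr X) : Prop :=
  ∀ x y : X, ∃ π ∈ Subgroup.closure (Set.range R.perm), π x = y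

end RackStr

/-- in an indecomposable crossed set, for
`T = {x | u ▷ x ≠ x}`, every `t ∈ T` moves some element of `T`. -/
theorem indecomposable_crossedSet_T_moves_T {X : Type*} (R : RackStr X)
    (hc : R.IsCrossed) (hind : R.Indecomposable) (u : X) (T : Set X)
    (hT : T = {x : X | R.act u x ≠ x}) :
    ∀ t ∈ T, ∃ t' ∈ T, R.act t t' ≠ t' := by
  subst hT
  intro t ht
  by_contra hcon
  push_neg at hcon
  obtain ⟨hq, hcr⟩ := hc
  have hperm : ∀ x a : X, R.perm x a = R.act x a := fun _ _ => rfl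
  -- key rack identity: φ_{x ▷ z} * φ_x = φ_x * φ_z
  have key : ∀ x z : X, R.perm (R.act x z) * R.perm x = R.perm x * R.perm z := by
    intro x z
    ext a
    simp only [Equiv.Perm.mul_apply, hperm]
    exact (R.self_distrib x z a).symm
  set Y : Set X := {y | ∀ w, R.act u w ≠ w → R.act w y = y} with hYdef
  have htY : t ∈ Y := fun w hw => (hcr t w).mp (hcon w hw)
  have huY : u ∉ Y := fun h => ht ((hcr t u).mp (h t ht))
  -- invariance of Y under the inner group
  have hinv : ∀ π ∈ Subgroup.closure (Set.range R.perm),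
      (∀ y ∈ Y, π y ∈ Y) ∧ (∀ y ∈ Y, π⁻¹ y ∈ Y) := by
    intro π hπ
    induction hπ using Subgroup.closure_induction with
    | mem x hx =>
      obtain ⟨x, rfl⟩ := hx
      by_cases hxS : R.act u x = x
      · -- φ_x commutes with φ_u
        have hcomm : R.perm x * R.perm u = R.perm u * R.perm x := by
          have := key u x
          rwa [hxS] at this
        constructor
        · intro y hy w hw
          set w' := (R.perm x)⁻¹ w with hw'def
          have hxw' : R.act x w' = w := by
            rw [← hperm]; exact Equiv.apply_symm_apply _ _
          have hw' : R.act u w' ≠ w' := by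
            intro h
            apply hw
            have h2 : R.perm u (R.perm x w') = R.perm x (R.perm u w') := by
              have := congrArg (fun p : Equiv.Perm X => p w') hcomm.symm
              simpa using this
            have hx2 : R.perm x w' = w := hxw'
            rw [hx2, show R.perm u w' = w' from h, hx2] at h2
            exact h2
          have k2 : R.perm w * R.perm x = R.perm x * R.perm w' := by
            have := key x w'
            rwa [hxw'] at this
          have : R.act w (R.perm x y) = R.perm x (R.act w' y) := by
            have := congrArg (fun p : Equiv.Perm X => p y) k2
            simpa [hperm] using this
          rw [this, hy w' hw']
        · intro y hy w hw
          set w'' := R.perm x w with hw''def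
          have hw'' : R.act u w'' ≠ w'' := by
            intro h
            apply hw
            have h2 : R.perm u (R.perm x w) = R.perm x (R.perm u w) := by
              have := congrArg (fun p : Equiv.Perm X => p w) hcomm.symm
              simpa using this
            rw [hperm, hperm] at h2
            have : R.act u w'' = R.perm x (R.act u w) := h2
            rw [h] at this
            exact (R.bij x).1 this.symm
          have k2 : R.perm w'' * R.perm x = R.perm x * R.perm w := key x w
          have hcalc : R.act w ((R.perm x)⁻¹ y) = (R.perm x)⁻¹ (R.act w'' y) := by
            have h3 : R.perm x (R.perm w ((R.perm x)⁻¹ y)) = R.perm w'' y := by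
              have := congrArg (fun p : Equiv.Perm X => p ((R.perm x)⁻¹ y)) k2.symm
              simpa using this
            have h4 := congrArg (fun a => (R.perm x)⁻¹ a) h3
            rw [show (R.perm x)⁻¹ (R.perm x (R.perm w ((R.perm x)⁻¹ y))) = R.perm w ((R.perm x)⁻¹ y) from Equiv.symm_apply_apply _ _] at h4
            exact h4
          rw [hcalc, hy w'' hw'']
      · -- x ∈ T : φ_x fixes Y pointwise
        constructor
        · intro y hy w hw
          have hfix : R.perm x y = y := hy x hxS
          rw [hfix]
          exact hy w hw
        · intro y hy w hw
          have hfix : R.perm x y = y := hy x hxS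
          have : (R.perm x)⁻¹ y = y := by
            conv_lhs => rw [← hfix]
            exact Equiv.symm_apply_apply _ _
          rw [this]
          exact hy w hw
    | one => exact ⟨fun y hy => by simpa using hy, fun y hy => by simpa using hy⟩
    | mul a b ha hb iha ihb =>
      refine ⟨fun y hy => ?_, fun y hy => ?_⟩
      · have : (a * b) y = a (b y) := rfl
        rw [this]; exact iha.1 _ (ihb.1 y hy)
      · have : (a * b)⁻¹ y = b⁻¹ (a⁻¹ y) := by simp [mul_inv_rev]
        rw [this]; exact ihb.2 _ (iha.2 y hy)
    | inv a ha iha =>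
      exact ⟨fun y hy => iha.2 y hy, fun y hy => by simpa using iha.1 y hy⟩
  obtain ⟨π, hπ, hπt⟩ := hind t u
  exact huY (hπt ▸ (hinv π hπ).1 t htY)
end

section
/- Let X be a finite indecomposable crossed set with profile 1^{a_1} 2^{a_2} ... k^{a_k} (i.e., for each x ∈ X the permutation φ_x has a_j disjoint cycles of length j). Let k_2 be the number of points fixed by φ_u other than u itself, and k_2' the number of points moved by φ_u, for some (any) u ∈ X. Then k_2 ≤ (Σ_{j≥2} a_j)(k_2' − 2) and |X| ≤ (Σ_{j≥2} a_j)(k_2' − 2) + k_2' + 1. -/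
namespace RackStr

variable {X : Type*} (R : RackStr X)


lemma perm_apply (x y : X) : R.perm x y = R.act x y := rfl

lemma perm_conj (x y : X) :
    R.perm (R.act x y) = R.perm x * R.perm y * (R.perm x)⁻¹ := by
  ext z
  show R.act (R.act x y) z = R.act x (R.act y ((R.perm x)⁻¹ z))
  rw [R.self_distrib x y ((R.perm x)⁻¹ z)]
  congr 1
  exact ((R.perm x).apply_symm_apply z).symm

lemma perm_closure_conj :
    ∀ π ∈ Subgroup.closure (Set.range R.perm), ∀ x : X,
      R.perm (π x) = π * R.perm x * π⁻¹ := by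
  intro π hπ
  induction hπ using Subgroup.closure_induction with
  | mem g hg =>
    obtain ⟨w, rfl⟩ := hg
    intro x
    exact R.perm_conj w x
  | one => intro x; simp
  | mul a b ha hb pa pb =>
    intro x
    have h1 : (a * b) x = a (b x) := rfl
    rw [h1, pa (b x), pb x]
    group
  | inv a ha pa =>
    intro x
    have h := pa (a⁻¹ x)
    rw [show a (a⁻¹ x) = x from a.apply_symm_apply x] at h
    rw [h]
    group

lemma exists_moved [Fintype X] [DecidableEq X]
    (hc : R.IsCrossed) (hind : R.Indecomposable)
    (u : X) (hM : ∃ m, R.act u m ≠ m) (x : X) :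
    ∃ m, R.act u m ≠ m ∧ R.act x m ≠ m := by
  by_contra hx0
  push_neg at hx0
  classical
  set W : Finset X := Finset.univ.filter
    (fun w => ∀ m, R.act u m ≠ m → R.act w m = m) with hW
  have hxW : x ∈ W := by
    simp only [hW, Finset.mem_filter, Finset.mem_univ, true_and]
    exact hx0
  have hgen : ∀ g : X, ∀ w ∈ W, R.act g w ∈ W := by
    intro g w hw
    simp only [hW, Finset.mem_filter, Finset.mem_univ, true_and] at hw ⊢
    by_cases hg : R.act u g = g
    · have hgu : R.act g u = u := (hc.2 u g).mp hg
      have h := R.perm_conj g u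
      rw [hgu] at h
      have hcomm : R.perm u * R.perm g = R.perm g * R.perm u :=
        eq_mul_inv_iff_mul_eq.mp h
      intro m hm
      have hm' : R.act u ((R.perm g)⁻¹ m) ≠ (R.perm g)⁻¹ m := by
        intro hh
        apply hm
        have h1 : R.perm g ((R.perm g)⁻¹ m) = m := (R.perm g).apply_symm_apply m
        show R.perm u m = m
        calc R.perm u m = R.perm u (R.perm g ((R.perm g)⁻¹ m)) := by rw [h1]
          _ = (R.perm u * R.perm g) ((R.perm g)⁻¹ m) := rfl
          _ = (R.perm g * R.perm u) ((R.perm g)⁻¹ m) := by rw [hcomm]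
          _ = R.perm g (R.perm u ((R.perm g)⁻¹ m)) := rfl
          _ = R.perm g ((R.perm g)⁻¹ m) := by
              rw [show R.perm u ((R.perm g)⁻¹ m) = (R.perm g)⁻¹ m from hh]
          _ = m := h1
      have h2 := R.perm_conj g w
      have h3 : R.perm (R.act g w) m = m := by
        rw [h2]
        show R.act g (R.act w ((R.perm g)⁻¹ m)) = m
        rw [hw _ hm']
        exact (R.perm g).apply_symm_apply m
      exact h3
    · have h1 : R.act w g = g := hw g hg
      have h2 : R.act g w = w := (hc.2 w g).mp h1
      rw [h2]
      exact hw
  have hclos : ∀ π ∈ Subgroup.closure (Set.range R.perm), ∀ w ∈ W, π w ∈ W := by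
    intro π hπ
    induction hπ using Subgroup.closure_induction with
    | mem g hg =>
      obtain ⟨a, rfl⟩ := hg
      intro w hw
      exact hgen a w hw
    | one => intro w hw; simpa using hw
    | mul a b ha hb pa pb =>
      intro w hw
      exact pa _ (pb w hw)
    | inv a ha pa =>
      intro w hw
      obtain ⟨w', hw', hww'⟩ := Finset.surj_on_of_inj_on_of_card_le
        (s := W) (t := W) (fun w _ => a w) (fun w hw => pa w hw)
        (fun w1 w2 _ _ h => a.injective h) le_rfl w hw
      have : a⁻¹ w = w' := by rw [hww']; exact a.symm_apply_apply w'
      rw [this]; exact hw'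
  obtain ⟨π, hπ, hπx⟩ := hind x u
  have huW : u ∈ W := hπx ▸ hclos π hπ x hxW
  obtain ⟨m0, hm0⟩ := hM
  simp only [hW, Finset.mem_filter, Finset.mem_univ, true_and] at huW
  exact hm0 (huW m0 hm0)

end RackStr

/-- size bounds for indecomposable crossed sets in terms of the
profile. Here `k2` is the number of fixed points of `φ_u` other than `u`,
`k2'` the number of moved points, and `c = Σ_{j≥2} a_j` is the total number of
nontrivial cycles of `φ_u` (the cardinality of its cycle type). Then
`k2 ≤ c * (k2' − 2)` and `|X| ≤ c * (k2' − 2) + k2' + 1`. -/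
theorem size_of_racks {X : Type*} [Fintype X] [DecidableEq X] (R : RackStr X)
    (hc : R.IsCrossed) (hind : R.Indecomposable) (u : X)
    (k2 k2' c : ℕ)
    (hk2 : k2 = (Finset.univ.filter fun y : X => R.act u y = y ∧ y ≠ u).card)
    (hk2' : k2' = (Finset.univ.filter fun y : X => R.act u y ≠ y).card)
    (hcyc : c = Multiset.card (R.perm u).cycleType) :
    k2 ≤ c * (k2' - 2) ∧ Fintype.card X ≤ c * (k2' - 2) + k2' + 1 := by
  classical
  set σ := R.perm u with hσ
  have hperm_apply : ∀ x y : X, R.perm x y = R.act x y := fun _ _ => rfl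
  have hsupp : σ.support = Finset.univ.filter (fun y => R.act u y ≠ y) := by
    ext y
    simp [Equiv.Perm.mem_support, hσ, hperm_apply]
  have hk2'supp : k2' = σ.support.card := by rw [hk2', hsupp]
  by_cases hM : ∃ m, R.act u m ≠ m
  · -- main case
    have key := R.exists_moved hc hind u hM
    have hcr : ∀ x y : X, R.act x y ≠ y → R.act y x ≠ x :=
      fun x y h hh => h ((hc.2 y x).mp hh)
    have hcomm : ∀ y : X, R.act u y = y → R.perm y * σ = σ * R.perm y := by
      intro y hy
      have hyu : R.act y u = u := (hc.2 u y).mp hy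
      have h := R.perm_conj y u
      rw [hyu] at h
      exact (eq_mul_inv_iff_mul_eq.mp h).symm
    have hprop : ∀ y : X, R.act u y = y → ∀ z m : X, σ.SameCycle z m →
        R.act y z = z → R.act y m = m := by
      intro y hy z m hsc hz
      obtain ⟨k, hk⟩ := hsc
      have hco : Commute (R.perm y) σ := hcomm y hy
      have hco' : R.perm y * σ ^ k = σ ^ k * R.perm y := hco.zpow_right k
      rw [← hk]
      show R.perm y ((σ ^ k) z) = (σ ^ k) z
      calc R.perm y ((σ ^ k) z) = (R.perm y * σ ^ k) z := rfl
        _ = (σ ^ k * R.perm y) z := by rw [hco']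
        _ = (σ ^ k) (R.perm y z) := rfl
        _ = (σ ^ k) z := by rw [show R.perm y z = z from hz]
    set cf := σ.cycleFactorsFinset with hcf
    have hzc : ∀ g : {g // g ∈ cf}, ∃ z, z ∈ (g : Equiv.Perm X).support := by
      intro g
      have hcyc' : (g : Equiv.Perm X).IsCycle :=
        (Equiv.Perm.mem_cycleFactorsFinset_iff.mp g.2).1
      obtain ⟨z, hz, -⟩ := hcyc'
      exact ⟨z, Equiv.Perm.mem_support.mpr hz⟩
    choose zc hzcs using hzc
    have hzcM : ∀ g, R.act u (zc g) ≠ zc g := by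
      intro g
      have h1 : zc g ∈ σ.support :=
        Equiv.Perm.mem_cycleFactorsFinset_support_le g.2 (hzcs g)
      simpa [Equiv.Perm.mem_support, hσ, hperm_apply] using h1
    set Y : {g // g ∈ cf} → Finset X := fun g =>
      Finset.univ.filter
        (fun y => (R.act u y = y ∧ y ≠ u) ∧ R.act y (zc g) ≠ zc g) with hY
    have hcover : (Finset.univ.filter fun y : X => R.act u y = y ∧ y ≠ u)
        ⊆ cf.attach.biUnion Y := by
      intro y hy
      simp only [Finset.mem_filter, Finset.mem_univ, true_and] at hy
      obtain ⟨m, hmu, hym⟩ := key y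
      have hmsupp : m ∈ σ.support := by
        simp [Equiv.Perm.mem_support, hσ, hperm_apply, hmu]
      have hgm : σ.cycleOf m ∈ cf :=
        Equiv.Perm.cycleOf_mem_cycleFactorsFinset_iff.mpr hmsupp
      refine Finset.mem_biUnion.mpr ⟨⟨σ.cycleOf m, hgm⟩, Finset.mem_attach _ _, ?_⟩
      simp only [hY, Finset.mem_filter, Finset.mem_univ, true_and]
      refine ⟨⟨hy.1, hy.2⟩, ?_⟩
      intro hfix
      have hzsup := hzcs ⟨σ.cycleOf m, hgm⟩
      have hsc : σ.SameCycle (zc ⟨σ.cycleOf m, hgm⟩) m :=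
        ((Equiv.Perm.mem_support_cycleOf_iff.mp hzsup).1).symm
      exact hym (hprop y hy.1 _ m hsc hfix)
    have hbound : ∀ g : {g // g ∈ cf}, (Y g).card ≤ k2' - 2 := by
      intro g
      have hz : R.act u (zc g) ≠ zc g := hzcM g
      obtain ⟨m, hmu, hmz⟩ := key (zc g)
      have hmu' : m ≠ u := fun h => hmu (h ▸ hc.1 u)
      have hsz : (R.perm (zc g)).support.card = k2' := by
        obtain ⟨π, hπ, hπz⟩ := hind u (zc g)
        rw [← hπz, R.perm_closure_conj π hπ u, ← hσ, Equiv.Perm.support_conj,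
          Finset.card_map, hk2'supp]
      have hsub2 : insert u (insert m (Y g)) ⊆ (R.perm (zc g)).support := by
        intro w hw
        rw [Finset.mem_insert, Finset.mem_insert] at hw
        rw [Equiv.Perm.mem_support]
        rcases hw with h | h | hw
        · rw [h]; exact hcr u (zc g) hz
        · rw [h]; exact hmz
        · simp only [hY, Finset.mem_filter, Finset.mem_univ, true_and] at hw
          exact hcr w (zc g) hw.2
      have humem : u ∉ insert m (Y g) := by
        rw [Finset.mem_insert]
        rintro (rfl | hu)
        · exact hmu' rfl
        · simp only [hY, Finset.mem_filter, Finset.mem_univ, true_and] at hu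
          exact hu.1.2 rfl
      have hmmem : m ∉ Y g := by
        simp only [hY, Finset.mem_filter, Finset.mem_univ, true_and]
        rintro ⟨⟨h1, -⟩, -⟩
        exact hmu h1
      have h1 : (insert u (insert m (Y g))).card ≤ k2' := by
        rw [← hsz]; exact Finset.card_le_card hsub2
      rw [Finset.card_insert_of_notMem humem,
        Finset.card_insert_of_notMem hmmem] at h1
      omega
    have hccf : c = cf.card := by
      rw [hcyc, Equiv.Perm.cycleType_def, Multiset.card_map]
      rfl
    have hk2le : k2 ≤ c * (k2' - 2) := by
      rw [hk2]
      calc (Finset.univ.filter fun y : X => R.act u y = y ∧ y ≠ u).card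
          ≤ (cf.attach.biUnion Y).card := Finset.card_le_card hcover
        _ ≤ ∑ g ∈ cf.attach, (Y g).card := Finset.card_biUnion_le
        _ ≤ ∑ _g ∈ cf.attach, (k2' - 2) := Finset.sum_le_sum (fun g _ => hbound g)
        _ = cf.attach.card * (k2' - 2) := by rw [Finset.sum_const, smul_eq_mul]
        _ = c * (k2' - 2) := by rw [Finset.card_attach, hccf]
    refine ⟨hk2le, ?_⟩
    have hpart : Fintype.card X = k2 + k2' + 1 := by
      have h1 : ((Finset.univ : Finset X).filter fun y => R.act u y = y).card
          + ((Finset.univ : Finset X).filter fun y => ¬ R.act u y = y).card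
          = Fintype.card X := by
        rw [← Finset.card_univ]
        exact Finset.card_filter_add_card_filter_not _
      have h2 : ((Finset.univ : Finset X).filter fun y => R.act u y = y)
          = insert u (Finset.univ.filter fun y : X => R.act u y = y ∧ y ≠ u) := by
        ext y
        simp only [Finset.mem_filter, Finset.mem_insert, Finset.mem_univ, true_and]
        constructor
        · intro hy
          by_cases h : y = u
          · exact Or.inl h
          · exact Or.inr ⟨hy, h⟩
        · rintro (h | ⟨hy, -⟩)
          · rw [h]; exact hc.1 u
          · exact hy
      have h3 : u ∉ (Finset.univ.filter fun y : X => R.act u y = y ∧ y ≠ u) := by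
        simp
      have h4 : ((Finset.univ : Finset X).filter fun y => ¬ R.act u y = y)
          = ((Finset.univ : Finset X).filter fun y => R.act u y ≠ y) := by
        simp [ne_eq]
      rw [h2, Finset.card_insert_of_notMem h3, h4, ← hk2, ← hk2'] at h1
      omega
    omega
  · -- trivial case : φ_u = 1
    push_neg at hM
    have hσ1 : σ = 1 := by
      ext y
      simp [hσ, hperm_apply, hM]
    have hall : ∀ x : X, R.perm x = 1 := by
      intro x
      obtain ⟨π, hπ, hπx⟩ := hind u x
      rw [← hπx, R.perm_closure_conj π hπ u, ← hσ, hσ1]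
      group
    have hsub : Fintype.card X ≤ 1 := by
      rw [Fintype.card_le_one_iff]
      intro a b
      obtain ⟨π, hπ, hab⟩ := hind a b
      have hle : Subgroup.closure (Set.range R.perm) ≤ ⊥ := by
        rw [Subgroup.closure_le]
        rintro p ⟨x, rfl⟩
        simp [hall x]
      have hπ1 : π = 1 := Subgroup.mem_bot.mp (hle hπ)
      rw [hπ1] at hab
      simpa using hab
    have hk20 : k2 = 0 := by
      rw [hk2, Finset.card_eq_zero]
      ext y
      simp only [Finset.mem_filter, Finset.mem_univ, true_and, Finset.notMem_empty,
        iff_false, not_and]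
      intro _ hy
      exact hy (Fintype.card_le_one_iff.mp hsub y u)
    exact ⟨by omega, by omega⟩
end

section
/- Let X be a finite indecomposable crossed set, let k_2 be the number of fixed points of φ_u other than u, and k_2' the number of points moved by φ_u (for any u ∈ X). Then k_2 ≤ (1/2) k_2' (k_2' − 2) and |X| ≤ (1/2) (k_2')^2 + 1. -/
theorem Equiv.Perm.apply_inv_self {α : Type*} (f : Equiv.Perm α) (x : α) : f (f⁻¹ x) = x :=
  Equiv.apply_symm_apply f x

theorem Equiv.Perm.inv_apply_self {α : Type*} (f : Equiv.Perm α) (x : α) : f⁻¹ (f x) = x :=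
  Equiv.symm_apply_apply f x

section Aux

variable {X : Type*} (R : RackStr X)

lemma RackStr.cross_ne (hc : R.IsCrossed) {x y : X} (h : R.act x y ≠ y) :
    R.act y x ≠ x := fun h' => h ((hc.2 x y).mpr h')

/-- Every element of the inner group is a quandle endomorphism. -/
lemma RackStr.closure_endo {π : Equiv.Perm X}
    (hπ : π ∈ Subgroup.closure (Set.range R.perm)) :
    ∀ y x : X, π (R.act y x) = R.act (π y) (π x) := by
  induction hπ using Subgroup.closure_induction with
  | mem g hg =>
    obtain ⟨w, rfl⟩ := hg
    intro y x
    exact R.self_distrib w y x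
  | one => intro y x; rfl
  | mul a b ha hb iha ihb =>
    intro y x
    simp only [Equiv.Perm.mul_apply, ihb, iha]
  | inv g hg ih =>
    intro y x
    apply g.injective
    rw [Equiv.Perm.apply_inv_self, ih, Equiv.Perm.apply_inv_self,
      Equiv.Perm.apply_inv_self]

/-- Key lemma: in an indecomposable crossed set, any two distinct points have a
common moved point. -/
lemma RackStr.common_moved (hc : R.IsCrossed) (hind : R.Indecomposable)
    {u v : X} (huv : u ≠ v) : ∃ m, R.act u m ≠ m ∧ R.act v m ≠ m := by
  by_contra hcon
  push_neg at hcon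
  -- hcon : ∀ m, R.act u m ≠ m → R.act v m = m
  set L : Subgroup (Equiv.Perm X) :=
    Subgroup.closure (R.perm '' {w | R.act v w = w}) with hLdef
  have hLsub : L ≤ Subgroup.closure (Set.range R.perm) := by
    rw [hLdef]
    refine (Subgroup.closure_le _).mpr ?_
    rintro p ⟨w, -, rfl⟩
    exact Subgroup.subset_closure ⟨w, rfl⟩
  have hLv : ∀ π ∈ L, π v = v := by
    intro π hπ
    induction hπ using Subgroup.closure_induction with
    | mem g hg =>
      obtain ⟨w, hw, rfl⟩ := hg
      exact (hc.2 w v).mpr hw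
    | one => rfl
    | mul a b ha hb iha ihb => simp only [Equiv.Perm.mul_apply, ihb, iha]
    | inv g hg ih =>
      apply g.injective
      rw [Equiv.Perm.apply_inv_self, ih]
  -- the orbit of u under L is invariant under the whole inner group
  have hOinv : ∀ π ∈ Subgroup.closure (Set.range R.perm), ∀ z : X,
      (∃ ρ ∈ L, ρ u = z) → (∃ ρ ∈ L, ρ u = π z) ∧ (∃ ρ ∈ L, ρ u = π⁻¹ z) := by
    intro π hπ
    induction hπ using Subgroup.closure_induction with
    | mem g hg =>
      obtain ⟨x, rfl⟩ := hg
      intro z hz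
      by_cases hx : R.act v x = x
      · have hgL : R.perm x ∈ L := by
          rw [hLdef]; exact Subgroup.subset_closure ⟨x, hx, rfl⟩
        obtain ⟨ρ, hρ, rfl⟩ := hz
        exact ⟨⟨R.perm x * ρ, mul_mem hgL hρ, rfl⟩,
          ⟨(R.perm x)⁻¹ * ρ, mul_mem (inv_mem hgL) hρ, rfl⟩⟩
      · -- x is moved by φ_v ; then φ_x fixes every point of the orbit
        obtain ⟨ρ, hρ, rfl⟩ := hz
        have hρe := R.closure_endo (hLsub hρ)
        have hρv : ρ v = v := hLv ρ hρ
        have hfix : R.act (ρ u) x = x := by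
          by_contra hne
          have hx' : R.act u (ρ⁻¹ x) ≠ ρ⁻¹ x := by
            intro h
            apply hne
            have h2 := hρe u (ρ⁻¹ x)
            rw [h, Equiv.Perm.apply_inv_self] at h2
            exact h2.symm
          have hv' : R.act v (ρ⁻¹ x) = ρ⁻¹ x := hcon _ hx'
          apply hx
          have h2 := hρe v (ρ⁻¹ x)
          rw [hv', Equiv.Perm.apply_inv_self, hρv] at h2
          exact h2.symm
        have hfix2 : R.perm x (ρ u) = ρ u := (hc.2 x (ρ u)).mpr hfix
        refine ⟨⟨ρ, hρ, hfix2.symm⟩, ⟨ρ, hρ, ?_⟩⟩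
        have h3 := congrArg (⇑(R.perm x)⁻¹) hfix2
        rw [Equiv.Perm.inv_apply_self] at h3
        exact h3
    | one =>
      intro z hz
      constructor <;> simpa using hz
    | mul a b ha hb iha ihb =>
      intro z hz
      constructor
      · rw [Equiv.Perm.mul_apply]
        exact (iha _ ((ihb z hz).1)).1
      · rw [mul_inv_rev, Equiv.Perm.mul_apply]
        exact (ihb _ ((iha z hz).2)).2
    | inv g hg ih =>
      intro z hz
      refine ⟨(ih z hz).2, ?_⟩
      rw [inv_inv]
      exact (ih z hz).1
  obtain ⟨π₀, hπ₀, hπ₀u⟩ := hind u v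
  have hu : ∃ ρ ∈ L, ρ u = u := ⟨1, one_mem L, rfl⟩
  have hv : ∃ ρ ∈ L, ρ u = v := by
    have h := (hOinv π₀ hπ₀ u hu).1
    rwa [hπ₀u] at h
  obtain ⟨ρ, hρ, hρu⟩ := hv
  have hρv : ρ v = v := hLv ρ hρ
  exact huv (ρ.injective (hρu.trans hρv.symm))

/-- All translations move the same number of points. -/
lemma RackStr.card_moved [Fintype X] [DecidableEq X]
    (hind : R.Indecomposable) (u v : X) :
    (Finset.univ.filter fun y : X => R.act v y ≠ y).card
      = (Finset.univ.filter fun y : X => R.act u y ≠ y).card := by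
  obtain ⟨π, hπ, hπu⟩ := hind u v
  have he := R.closure_endo hπ
  symm
  refine Finset.card_bij (fun y _ => π y) ?_ ?_ ?_
  · intro y hy
    rw [Finset.mem_filter] at hy ⊢
    refine ⟨Finset.mem_univ _, ?_⟩
    rw [← hπu, ← he u y]
    intro h
    exact hy.2 (π.injective h)
  · intro a _ b _ h
    exact π.injective h
  · intro z hz
    rw [Finset.mem_filter] at hz
    refine ⟨π⁻¹ z, ?_, Equiv.Perm.apply_inv_self _ _⟩
    rw [Finset.mem_filter]
    refine ⟨Finset.mem_univ _, ?_⟩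
    intro h
    apply hz.2
    have h2 := he u (π⁻¹ z)
    rw [h, hπu, Equiv.Perm.apply_inv_self] at h2
    rw [← h2]

end Aux

/-- for a finite indecomposable crossed set,
`k2 ≤ (1/2) k2' (k2' − 2)` and `|X| ≤ (1/2) k2'^2 + 1`. -/
theorem size_of_racks_cor {X : Type*} [Fintype X] [DecidableEq X] (R : RackStr X)
    (hc : R.IsCrossed) (hind : R.Indecomposable) (u : X)
    (k2 k2' : ℕ)
    (hk2 : k2 = (Finset.univ.filter fun y : X => R.act u y = y ∧ y ≠ u).card)
    (hk2' : k2' = (Finset.univ.filter fun y : X => R.act u y ≠ y).card) :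
    (k2 : ℚ) ≤ (1 / 2) * k2' * ((k2' : ℚ) - 2) ∧
      (Fintype.card X : ℚ) ≤ (1 / 2) * (k2' : ℚ) ^ 2 + 1 := by
  classical
  set M : Finset X := Finset.univ.filter (fun y : X => R.act u y ≠ y) with hM
  set S : Finset X := Finset.univ.filter (fun y : X => R.act u y = y ∧ y ≠ u) with hS
  have hMu : ∀ v : X, (Finset.univ.filter fun y : X => R.act v y ≠ y).card = k2' := by
    intro v
    rw [hk2', hM]
    exact R.card_moved hind u v
  -- |X| = k2 + k2' + 1
  have hcard : Fintype.card X = k2 + k2' + 1 := by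
    have h1 := Finset.card_filter_add_card_filter_not
      (s := (Finset.univ : Finset X)) (p := fun y : X => R.act u y = y)
    have h2 : (Finset.univ.filter fun y : X => R.act u y = y) = insert u S := by
      ext y
      simp only [hS, Finset.mem_filter, Finset.mem_univ, true_and, Finset.mem_insert]
      constructor
      · intro h
        by_cases hy : y = u
        · exact Or.inl hy
        · exact Or.inr ⟨h, hy⟩
      · rintro (hy | ⟨h, -⟩)
        · rw [hy]; exact hc.1 u
        · exact h
    have h3 : u ∉ S := by simp [hS]
    have h4 : (Finset.univ.filter fun y : X => R.act u y = y).card = k2 + 1 := by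
      rw [h2, Finset.card_insert_of_notMem h3, hk2]
    have h5 : (Finset.univ.filter fun y : X => ¬ (R.act u y = y)) = M := by
      rw [hM]
    rw [h4, h5, Finset.card_univ] at h1
    have h6 : M.card = k2' := by rw [hk2']
    omega
  rcases Nat.eq_zero_or_pos k2' with hz | hpos
  · -- k2' = 0 : then X = {u}
    have hX : ∀ v : X, v = u := by
      intro v
      by_contra hvu
      obtain ⟨m, hm1, -⟩ := R.common_moved hc hind (fun h : u = v => hvu h.symm)
      have hmM : m ∈ M := by
        rw [hM]; exact Finset.mem_filter.mpr ⟨Finset.mem_univ _, hm1⟩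
      have hpos' : 0 < M.card := Finset.card_pos.mpr ⟨m, hmM⟩
      have h6 : M.card = k2' := by rw [hk2']
      omega
    have hk20 : k2 = 0 := by
      rw [hk2, Finset.card_eq_zero, hS]
      ext y
      simp only [Finset.mem_filter, Finset.mem_univ, true_and, Finset.notMem_empty,
        iff_false, not_and]
      exact fun _ hh => hh (hX y)
    have hc1 : Fintype.card X = 1 := by omega
    rw [hz, hk20, hc1]
    norm_num
  · -- now k2' ≥ 2
    have h2k : 2 ≤ k2' := by
      by_contra h
      have h1 : M.card = 1 := by
        have h6 : M.card = k2' := by rw [hk2']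
        omega
      obtain ⟨m, hm⟩ := Finset.card_eq_one.mp h1
      have hmM : m ∈ M := by rw [hm]; exact Finset.mem_singleton_self m
      rw [hM, Finset.mem_filter] at hmM
      have hum : R.act u m ≠ m := hmM.2
      have hzM : R.act u m ∈ M := by
        rw [hM]
        refine Finset.mem_filter.mpr ⟨Finset.mem_univ _, ?_⟩
        intro hzz
        exact hum ((R.bij u).1 hzz)
      rw [hm, Finset.mem_singleton] at hzM
      exact hum hzM
    -- every y ∈ S is moved by at least two elements of M
    have claim1 : ∀ y ∈ S, 2 ≤ (M.filter fun m => R.act y m ≠ m).card := by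
      intro y hyS
      rw [hS, Finset.mem_filter] at hyS
      obtain ⟨-, huy, hyu⟩ := hyS
      obtain ⟨m₀, hm₀u, hm₀y⟩ := R.common_moved hc hind (fun h : u = y => hyu h.symm)
      have hne : R.act u m₀ ≠ m₀ := hm₀u
      have hm₁u : R.act u (R.act u m₀) ≠ R.act u m₀ := by
        intro h
        exact hm₀u ((R.bij u).1 h)
      have hm₁y : R.act y (R.act u m₀) ≠ R.act u m₀ := by
        intro h
        apply hm₀y
        apply (R.bij u).1
        calc R.act u (R.act y m₀) = R.act (R.act u y) (R.act u m₀) := R.self_distrib u y m₀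
          _ = R.act y (R.act u m₀) := by rw [huy]
          _ = R.act u m₀ := h
      have hsub : ({m₀, R.act u m₀} : Finset X) ⊆ M.filter fun m => R.act y m ≠ m := by
        intro t ht
        rcases Finset.mem_insert.mp ht with rfl | ht
        · refine Finset.mem_filter.mpr ⟨?_, hm₀y⟩
          rw [hM]
          exact Finset.mem_filter.mpr ⟨Finset.mem_univ _, hm₀u⟩
        · rw [Finset.mem_singleton] at ht; subst ht
          refine Finset.mem_filter.mpr ⟨?_, hm₁y⟩
          rw [hM]
          exact Finset.mem_filter.mpr ⟨Finset.mem_univ _, hm₁u⟩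
      calc 2 = ({m₀, R.act u m₀} : Finset X).card := (Finset.card_pair (Ne.symm hne)).symm
        _ ≤ _ := Finset.card_le_card hsub
    -- every m ∈ M moves at most k2' - 2 elements of S
    have claim2 : ∀ m ∈ M, (S.filter fun y => R.act y m ≠ m).card ≤ k2' - 2 := by
      intro m hmM
      rw [hM, Finset.mem_filter] at hmM
      have hum : R.act u m ≠ m := hmM.2
      have hmu : m ≠ u := fun h => hum (h ▸ hc.1 u)
      obtain ⟨w, hwu, hwm⟩ := R.common_moved hc hind (Ne.symm hmu)
      set N : Finset X := Finset.univ.filter (fun y : X => R.act m y ≠ y) with hN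
      have hNcard : N.card = k2' := hMu m
      have huN : u ∈ N := by
        rw [hN]; exact Finset.mem_filter.mpr ⟨Finset.mem_univ _, R.cross_ne hc hum⟩
      have hwN : w ∈ N := by
        rw [hN]; exact Finset.mem_filter.mpr ⟨Finset.mem_univ _, hwm⟩
      have hwu' : w ≠ u := fun h => hwu (h ▸ hc.1 u)
      have hsub : S.filter (fun y => R.act y m ≠ m) ⊆ (N.erase u).erase w := by
        intro y hy
        rw [Finset.mem_filter] at hy
        obtain ⟨hyS, hym⟩ := hy
        rw [hS, Finset.mem_filter] at hyS
        obtain ⟨-, huy, hyu⟩ := hyS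
        have hyN : y ∈ N := by
          rw [hN]; exact Finset.mem_filter.mpr ⟨Finset.mem_univ _, R.cross_ne hc hym⟩
        have hyw : y ≠ w := fun h => hwu (h ▸ huy)
        exact Finset.mem_erase.mpr ⟨hyw, Finset.mem_erase.mpr ⟨hyu, hyN⟩⟩
      calc (S.filter fun y => R.act y m ≠ m).card ≤ ((N.erase u).erase w).card :=
            Finset.card_le_card hsub
        _ = N.card - 1 - 1 := by
            rw [Finset.card_erase_of_mem (Finset.mem_erase.mpr ⟨hwu', hwN⟩),
              Finset.card_erase_of_mem huN]
        _ ≤ k2' - 2 := by rw [hNcard]; omega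
    -- double counting
    have hdc : ∑ y ∈ S, (M.filter fun m => R.act y m ≠ m).card
        = ∑ m ∈ M, (S.filter fun y => R.act y m ≠ m).card := by
      simp_rw [Finset.card_filter]
      exact Finset.sum_comm
    have hScard : S.card = k2 := by rw [hk2]
    have hMcard : M.card = k2' := by rw [hk2']
    have hmain : 2 * k2 ≤ k2' * (k2' - 2) := by
      have hL : 2 * k2 ≤ ∑ y ∈ S, (M.filter fun m => R.act y m ≠ m).card := by
        have h := Finset.sum_le_sum claim1
        rw [Finset.sum_const, hScard, smul_eq_mul, mul_comm] at h
        exact h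
      have hR : ∑ m ∈ M, (S.filter fun y => R.act y m ≠ m).card ≤ k2' * (k2' - 2) := by
        have h := Finset.sum_le_sum claim2
        rw [Finset.sum_const, hMcard, smul_eq_mul] at h
        exact h
      calc 2 * k2 ≤ _ := hL
        _ = _ := hdc
        _ ≤ k2' * (k2' - 2) := hR
    have hq : 2 * (k2 : ℚ) ≤ (k2' : ℚ) * ((k2' : ℚ) - 2) := by
      have hcast : ((2 * k2 : ℕ) : ℚ) ≤ ((k2' * (k2' - 2) : ℕ) : ℚ) :=
        Nat.cast_le.mpr hmain
      rw [Nat.cast_mul, Nat.cast_mul, Nat.cast_sub h2k] at hcast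
      push_cast at hcast ⊢
      linarith
    constructor
    · nlinarith [hq]
    · have hcq : (Fintype.card X : ℚ) = (k2 : ℚ) + (k2' : ℚ) + 1 := by
        rw [hcard]; push_cast; ring
      rw [hcq]
      nlinarith [hq]
end

section
/- Let d ∈ ℕ, a, b ∈ ℕ with a, b ≥ 2 and gcd(a, b) = 1, and let X = {1, ..., d} be an indecomposable crossed set such that for every x ∈ X, φ_1^a(x) = x or φ_1^b(x) = x. Define S = {x ∈ X | 1 ▷ x = x, x ≠ 1}, T_a = {x | φ_1^a(x) = x, 1 ▷ x ≠ x}, T_b = {x | φ_1^b(x) = x, 1 ▷ x ≠ x}. Then X is the disjoint union of {1}, S, T_a, T_b, and moreover: 1 ▷ 1 = 1, 1 ▷ S = S, 1 ▷ T_a = T_a, 1 ▷ T_b = T_b; s ▷ 1 = 1, s ▷ S = S, s ▷ T_a = T_a, s ▷ T_b = T_b for all s ∈ S; x ▷ T_b = T_b for all x ∈ T_a; and y ▷ T_a = T_a for all y ∈ T_b. -/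
section Aux
variable {X : Type*}

lemma image_eq_of_mem_iff' {f : X → X} (hf : Function.Bijective f) {T : Set X}
    (h1 : ∀ z ∈ T, f z ∈ T) (h2 : ∀ z, f z ∈ T → z ∈ T) : f '' T = T := by
  apply Set.eq_of_subset_of_subset
  · rintro _ ⟨z, hz, rfl⟩; exact h1 z hz
  · intro y hy
    obtain ⟨z, rfl⟩ := hf.surjective y
    exact ⟨z, h2 z hy, rfl⟩

lemma comm_iterate' {g f : X → X} (hcomm : ∀ z, f (g z) = g (f z)) (n : ℕ) :
    ∀ z, f (g^[n] z) = g^[n] (f z) := by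
  induction n with
  | zero => intro z; rfl
  | succ n ih =>
    intro z
    rw [Function.iterate_succ_apply, ih, hcomm, Function.iterate_succ_apply]

lemma key_S' {g f : X → X} {e : X} (hf : Function.Bijective f)
    (hcomm : ∀ z, f (g z) = g (f z)) (hfe : f e = e) :
    f '' {z | g z = z ∧ z ≠ e} = {z | g z = z ∧ z ≠ e} := by
  apply image_eq_of_mem_iff' hf
  · rintro z ⟨h1, h2⟩
    refine ⟨by rw [← hcomm, h1], fun h => h2 (hf.injective (h.trans hfe.symm))⟩
  · rintro z ⟨h1, h2⟩
    rw [← hcomm] at h1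
    exact ⟨hf.injective h1, fun h => h2 (by rw [h, hfe])⟩

lemma key_fix' {g f : X → X} {n : ℕ} (hf : Function.Bijective f)
    (hcomm : ∀ z, f (g z) = g (f z)) :
    f '' {z | g^[n] z = z ∧ g z ≠ z} = {z | g^[n] z = z ∧ g z ≠ z} := by
  have hc := comm_iterate' hcomm n
  apply image_eq_of_mem_iff' hf
  · rintro z ⟨h1, h2⟩
    refine ⟨by rw [← hc, h1], fun h => h2 ?_⟩
    rw [← hcomm] at h
    exact hf.injective h
  · rintro z ⟨h1, h2⟩
    rw [← hc] at h1
    exact ⟨hf.injective h1, fun h => h2 (by rw [← hcomm, h])⟩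

lemma key_ab' {g f : X → X} {a b : ℕ} (hf : Function.Bijective f)
    (hcomm : ∀ z, f (g^[a] z) = g^[a] (f z))
    (hgcd : ∀ z, g^[a] z = z → g^[b] z = z → g z = z)
    (hcover : ∀ z, g^[a] z = z ∨ g^[b] z = z) :
    f '' {z | g^[b] z = z ∧ g z ≠ z} = {z | g^[b] z = z ∧ g z ≠ z} := by
  apply image_eq_of_mem_iff' hf
  · rintro z ⟨h1, h2⟩
    have hna : g^[a] (f z) ≠ f z := by
      rw [← hcomm]
      intro h
      exact h2 (hgcd z (hf.injective h) h1)
    refine ⟨(hcover (f z)).resolve_left hna, fun h => hna (Function.IsFixedPt.iterate h a)⟩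
  · rintro z ⟨h1, h2⟩
    have hna : g^[a] z ≠ z := by
      intro h
      have : g^[a] (f z) = f z := by rw [← hcomm, h]
      exact h2 (hgcd (f z) this h1)
    have hb' : g^[b] z = z := (hcover z).resolve_left hna
    exact ⟨hb', fun h => hna (Function.IsFixedPt.iterate h a)⟩

lemma iterate_act' (R : RackStr X) (e : X) (n : ℕ) :
    ∀ w z : X, (R.act e)^[n] (R.act w z)
      = R.act ((R.act e)^[n] w) ((R.act e)^[n] z) := by
  induction n with
  | zero => intro w z; rfl
  | succ n ih =>
    intro w z
    rw [Function.iterate_succ_apply, R.self_distrib, ih,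
      ← Function.iterate_succ_apply, ← Function.iterate_succ_apply]

end Aux

/-- decomposition of an indecomposable crossed set under the
assumption that every element is fixed by `φ_e^a` or `φ_e^b` with
`gcd(a,b) = 1`. -/
theorem abdec {X : Type*} (R : RackStr X) (hc : R.IsCrossed)
    (hind : R.Indecomposable) (e : X) (a b : ℕ)
    (ha : 2 ≤ a) (hb : 2 ≤ b) (hab : Nat.gcd a b = 1)
    (hcover : ∀ x : X, (R.act e)^[a] x = x ∨ (R.act e)^[b] x = x)
    (S Ta Tb : Set X)
    (hS : S = {x : X | R.act e x = x ∧ x ≠ e})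
    (hTa : Ta = {x : X | (R.act e)^[a] x = x ∧ R.act e x ≠ x})
    (hTb : Tb = {x : X | (R.act e)^[b] x = x ∧ R.act e x ≠ x}) :
    ({e} ∪ S ∪ Ta ∪ Tb = (Set.univ : Set X)) ∧
    Disjoint ({e} : Set X) S ∧ Disjoint ({e} : Set X) Ta ∧
    Disjoint ({e} : Set X) Tb ∧ Disjoint S Ta ∧ Disjoint S Tb ∧
    Disjoint Ta Tb ∧
    R.act e e = e ∧ R.act e '' S = S ∧ R.act e '' Ta = Ta ∧ R.act e '' Tb = Tb ∧
    (∀ s ∈ S, R.act s e = e ∧ R.act s '' S = S ∧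
      R.act s '' Ta = Ta ∧ R.act s '' Tb = Tb) ∧
    (∀ x ∈ Ta, R.act x '' Tb = Tb) ∧ (∀ y ∈ Tb, R.act y '' Ta = Ta) := by
  subst hS hTa hTb
  set g := R.act e with hg
  have hq : R.act e e = e := hc.1 e
  have hgcd : ∀ z, g^[a] z = z → g^[b] z = z → g z = z := by
    intro z h1 h2
    have h3 : Function.IsPeriodicPt g (Nat.gcd a b) z :=
      Function.IsPeriodicPt.gcd (h1 : Function.IsPeriodicPt g a z) h2
    rw [hab] at h3
    exact h3
  have hgcd' : ∀ z, g^[b] z = z → g^[a] z = z → g z = z := fun z h1 h2 => hgcd z h2 h1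
  have hcover' : ∀ z, g^[b] z = z ∨ g^[a] z = z := fun z => (hcover z).symm
  -- commutation of act s with g when g s = s
  have hcomm_s : ∀ s : X, g s = s → ∀ z, R.act s (g z) = g (R.act s z) := by
    intro s hs z
    have := R.self_distrib e s z
    rw [show R.act e s = s from hs] at this
    exact this.symm
  refine ⟨?_, ?_, ?_, ?_, ?_, ?_, ?_, hq, ?_, ?_, ?_, ?_, ?_, ?_⟩
  · -- union
    ext x
    simp only [Set.mem_union, Set.mem_singleton_iff, Set.mem_setOf_eq, Set.mem_univ, iff_true]
    by_cases hfix : g x = x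
    · by_cases hx : x = e
      · exact Or.inl (Or.inl (Or.inl hx))
      · exact Or.inl (Or.inl (Or.inr ⟨hfix, hx⟩))
    · rcases hcover x with h | h
      · exact Or.inl (Or.inr ⟨h, hfix⟩)
      · exact Or.inr ⟨h, hfix⟩
  · rw [Set.disjoint_left]; rintro x rfl ⟨_, hx⟩; exact hx rfl
  · rw [Set.disjoint_left]; rintro x rfl ⟨_, hx⟩; exact hx hq
  · rw [Set.disjoint_left]; rintro x rfl ⟨_, hx⟩; exact hx hq
  · rw [Set.disjoint_left]; rintro x ⟨h1, _⟩ ⟨_, h2⟩; exact h2 h1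
  · rw [Set.disjoint_left]; rintro x ⟨h1, _⟩ ⟨_, h2⟩; exact h2 h1
  · rw [Set.disjoint_left]; rintro x ⟨h1, h2⟩ ⟨h3, _⟩; exact h2 (hgcd x h1 h3)
  · exact key_S' (R.bij e) (fun z => rfl) hq
  · exact key_fix' (R.bij e) (fun z => rfl)
  · exact key_fix' (R.bij e) (fun z => rfl)
  · -- s ∈ S
    rintro s ⟨hs1, hs2⟩
    have hse : R.act s e = e := (hc.2 e s).mp hs1
    have hcm := hcomm_s s hs1
    exact ⟨hse, key_S' (R.bij s) hcm hse, key_fix' (R.bij s) hcm, key_fix' (R.bij s) hcm⟩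
  · -- x ∈ Ta acts on Tb
    rintro x ⟨hx1, _⟩
    refine key_ab' (R.bij x) ?_ hgcd hcover
    intro z
    rw [iterate_act' R e a x z, hx1]
  · -- y ∈ Tb acts on Ta
    rintro y ⟨hy1, _⟩
    refine key_ab' (R.bij y) ?_ hgcd' hcover'
    intro z
    rw [iterate_act' R e b y z, hy1]
end

section
/- Let X be an injective rack, 𝒪 ⊆ X³ a Hurwitz orbit, and (x, y, z) ∈ 𝒪. Then the intersection of the ⟨σ_1⟩-orbit of (x,y,z) with the ⟨σ_2⟩-orbit of (x,y,z) consists of exactly one element, namely (x,y,z) itself. -/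
/-- Relations of the enveloping group `G_X`: `x y = (x ▷ y) x` for `x, y ∈ X`. -/
def envRels {X : Type*} (R : RackStr X) : Set (FreeGroup X) :=
  {w | ∃ x y : X,
    w = FreeGroup.of x * FreeGroup.of y *
      (FreeGroup.of (R.act x y) * FreeGroup.of x)⁻¹}

/-- The first Hurwitz move `σ₁ · (x,y,z) = (x ▷ y, x, z)`. -/
def hs1 {X : Type*} (R : RackStr X) (v : X × X × X) : X × X × X :=
  (R.act v.1 v.2.1, v.1, v.2.2)

/-- The second Hurwitz move `σ₂ · (x,y,z) = (x, y ▷ z, y)`. -/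
def hs2 {X : Type*} (R : RackStr X) (v : X × X × X) : X × X × X :=
  (v.1, R.act v.2.1 v.2.2, v.2.1)


section Aux

variable {X : Type*} (R : RackStr X)

lemma env_rel (x y : X) :
    (PresentedGroup.of x : PresentedGroup (envRels R)) * PresentedGroup.of y =
      PresentedGroup.of (R.act x y) * PresentedGroup.of x := by
  have hmem : FreeGroup.of x * FreeGroup.of y *
      (FreeGroup.of (R.act x y) * FreeGroup.of x)⁻¹ ∈
      Subgroup.normalClosure (envRels R) :=
    Subgroup.subset_normalClosure ⟨x, y, rfl⟩
  have h1 : PresentedGroup.mk (envRels R)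
      (FreeGroup.of x * FreeGroup.of y *
        (FreeGroup.of (R.act x y) * FreeGroup.of x)⁻¹) = 1 :=
    (QuotientGroup.eq_one_iff _).mpr hmem
  have := h1
  simp only [map_mul, map_inv] at this
  have h2 : (PresentedGroup.mk (envRels R) (FreeGroup.of x) : PresentedGroup (envRels R)) =
      PresentedGroup.of x := rfl
  rw [mul_inv_eq_one] at this
  exact this

/-- The product invariant in the enveloping group. -/
def eF (w : X × X × X) : PresentedGroup (envRels R) :=
  PresentedGroup.of w.1 * PresentedGroup.of w.2.1 * PresentedGroup.of w.2.2

lemma eF_hs1 (w : X × X × X) : eF R (hs1 R w) = eF R w := by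
  simp only [eF, hs1, ← env_rel]

lemma eF_hs2 (w : X × X × X) : eF R (hs2 R w) = eF R w := by
  simp only [eF, hs2]
  rw [mul_assoc, mul_assoc, ← env_rel]

lemma eF_hs1_iter (n : ℕ) (w : X × X × X) : eF R ((hs1 R)^[n] w) = eF R w := by
  induction n with
  | zero => rfl
  | succ n ih => rw [Function.iterate_succ_apply', eF_hs1, ih]

lemma eF_hs2_iter (n : ℕ) (w : X × X × X) : eF R ((hs2 R)^[n] w) = eF R w := by
  induction n with
  | zero => rfl
  | succ n ih => rw [Function.iterate_succ_apply', eF_hs2, ih]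

lemma hs1_iter_snd (n : ℕ) (w : X × X × X) : ((hs1 R)^[n] w).2.2 = w.2.2 := by
  induction n with
  | zero => rfl
  | succ n ih => rw [Function.iterate_succ_apply']; exact ih

lemma hs2_iter_fst (n : ℕ) (w : X × X × X) : ((hs2 R)^[n] w).1 = w.1 := by
  induction n with
  | zero => rfl
  | succ n ih => rw [Function.iterate_succ_apply']; exact ih

end Aux

/-- for an injective rack `X` (the canonical map `X → G_X` is
injective) and any `v = (x,y,z) ∈ X³`, the `⟨σ₁⟩`-orbit of `v` and the
`⟨σ₂⟩`-orbit of `v` intersect exactly in `{v}`. The cyclic orbit of the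
bijection `hs1` (resp. `hs2`) through `v` consists of all forward and
backward iterates of `v`. -/
theorem sigma1_orbit_inter_sigma2_orbit {X : Type*} (R : RackStr X)
    (hinj : Function.Injective
      (fun x : X => (PresentedGroup.of x : PresentedGroup (envRels R))))
    (v : X × X × X) :
    {w | ∃ n : ℕ, (hs1 R)^[n] v = w ∨ (hs1 R)^[n] w = v} ∩
      {w | ∃ n : ℕ, (hs2 R)^[n] v = w ∨ (hs2 R)^[n] w = v} = {v} := by
  ext w
  simp only [Set.mem_inter_iff, Set.mem_setOf_eq, Set.mem_singleton_iff]
  constructor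
  · rintro ⟨⟨n, h1⟩, ⟨m, h2⟩⟩
    have hz : w.2.2 = v.2.2 := by
      rcases h1 with h | h
      · rw [← h, hs1_iter_snd]
      · rw [← h, hs1_iter_snd]
    have hx : w.1 = v.1 := by
      rcases h2 with h | h
      · rw [← h, hs2_iter_fst]
      · rw [← h, hs2_iter_fst]
    have hF : eF R w = eF R v := by
      rcases h1 with h | h
      · rw [← h, eF_hs1_iter]
      · rw [← h, eF_hs1_iter]
    have hy : w.2.1 = v.2.1 := by
      apply hinj
      simp only [eF, hx, hz] at hF
      have := mul_left_cancel (mul_right_cancel hF)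
      simpa using this
    exact Prod.ext hx (Prod.ext hy hz)
  · rintro rfl
    exact ⟨⟨0, Or.inl rfl⟩, ⟨0, Or.inl rfl⟩⟩
end

section
/- Let m ≥ 2 and λ ∈ ℤ/m. Consider the monotone closure operator on subsets of ℤ/m generated by the rule: if x − 1, x − λ − 1, and x + λ all lie in P, then x may be added. Then the set I = ⟨λ⟩ ∪ J, where J is any set of representatives for (ℤ/m)/⟨λ⟩, is a plague, i.e., iterating the closure starting from I yields all of ℤ/m. -/
/-- Membership in the closure of `I ⊆ ℤ/m` under the rule: if `x − 1`,
`x − λ − 1` and `x + λ` all lie in `P`, then `x` may be added. -/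
inductive Reach11 {m : ℕ} (lam : ZMod m) (I : Set (ZMod m)) : ZMod m → Prop
  | base (x : ZMod m) (hx : x ∈ I) : Reach11 lam I x
  | step (x : ZMod m) (h1 : Reach11 lam I (x - 1))
      (h2 : Reach11 lam I (x - lam - 1)) (h3 : Reach11 lam I (x + lam)) :
      Reach11 lam I x

/-- the union of the subgroup `⟨λ⟩` with any set of coset
representatives for `(ℤ/m)/⟨λ⟩` is a plague for the rule
"if `x−1, x−λ−1, x+λ ∈ P` then add `x`". -/
theorem subgroup_union_representatives_plague (m : ℕ) (hm : 2 ≤ m)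
    (lam : ZMod m) (J I : Set (ZMod m))
    (hJ : ∀ y : ZMod m, ∃! j, j ∈ J ∧ y - j ∈ AddSubgroup.zmultiples lam)
    (hI : I = (AddSubgroup.zmultiples lam : Set (ZMod m)) ∪ J) :
    ∀ x : ZMod m, Reach11 lam I x := by
  haveI : NeZero m := ⟨by omega⟩
  subst hI
  have hm0 : (m : ℤ) ≠ 0 := by exact_mod_cast (by omega : m ≠ 0)
  have hmlam : (m : ℤ) • lam = 0 := by
    rw [natCast_zsmul, nsmul_eq_mul, ZMod.natCast_self, zero_mul]
  -- every integer multiple of lam is a natural multiple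
  have hnat : ∀ z : ℤ, ∃ k : ℕ, k • lam = z • lam := by
    intro z
    refine ⟨(z % m).toNat, ?_⟩
    have hk : ((z % m).toNat : ℤ) = z % m := Int.toNat_of_nonneg (Int.emod_nonneg z hm0)
    calc ((z % m).toNat : ℕ) • lam = ((z % m).toNat : ℤ) • lam := (natCast_zsmul _ _).symm
      _ = (z % m) • lam := by rw [hk]
      _ = (m * (z / m)) • lam + (z % m) • lam := by
          rw [mul_comm, mul_zsmul, hmlam, smul_zero, zero_add]
      _ = (m * (z / m) + z % m) • lam := (add_zsmul _ _ _).symm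
      _ = z • lam := by rw [Int.mul_ediv_add_emod]
  set S := AddSubgroup.zmultiples lam with hS
  have key : ∀ n : ℕ, ∀ x : ZMod m, x - (n : ZMod m) ∈ S →
      Reach11 lam ((S : Set (ZMod m)) ∪ J) x := by
    intro n
    induction n with
    | zero =>
      intro x hx
      exact .base x (Or.inl (by simpa using hx))
    | succ n ih =>
      intro x hx
      obtain ⟨j, ⟨hjJ, hj⟩, _⟩ := hJ ((n + 1 : ℕ) : ZMod m)
      have hjn : j - ((n : ZMod m) + 1) ∈ S := by
        have := S.neg_mem hj
        simpa [neg_sub, Nat.cast_succ] using this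
    -- spread down the coset of j
      have hstep : ∀ k : ℕ, Reach11 lam ((S : Set (ZMod m)) ∪ J) (j - k • lam) := by
        intro k
        induction k with
        | zero => simpa using Reach11.base j (Or.inr hjJ)
        | succ k ihk =>
          apply Reach11.step
          · apply ih
            have : j - (k + 1 : ℕ) • lam - 1 - (n : ZMod m)
                = (j - ((n : ZMod m) + 1)) - (k + 1 : ℕ) • lam := by ring
            rw [this]
            exact S.sub_mem hjn (S.nsmul_mem (AddSubgroup.mem_zmultiples lam) _)
          · apply ih
            have : j - (k + 1 : ℕ) • lam - lam - 1 - (n : ZMod m)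
                = (j - ((n : ZMod m) + 1)) - ((k + 1 : ℕ) • lam + lam) := by ring
            rw [this]
            exact S.sub_mem hjn
              (S.add_mem (S.nsmul_mem (AddSubgroup.mem_zmultiples lam) _)
                (AddSubgroup.mem_zmultiples lam))
          · have : j - (k + 1 : ℕ) • lam + lam = j - k • lam := by
              rw [succ_nsmul]; ring
            rw [this]
            exact ihk
      -- write x as j - k • lam
      have hxj : j - x ∈ S := by
        have h1 : ((n + 1 : ℕ) : ZMod m) - j ∈ S := hj
        have h2 := S.neg_mem (S.add_mem hx h1)
        simpa [neg_sub, sub_add_sub_cancel, neg_add_rev] using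
          S.neg_mem (S.add_mem hx h1)
      obtain ⟨z, hz⟩ := AddSubgroup.mem_zmultiples_iff.mp hxj
      obtain ⟨k, hk⟩ := hnat z
      have : x = j - k • lam := by rw [hk, hz]; ring
      rw [this]
      exact hstep k
  intro x
  apply key x.val
  have : ((x.val : ℕ) : ZMod m) = x := by
    simp [ZMod.natCast_val, ZMod.cast_id]
  rw [this, sub_self]
  exact S.zero_mem
end

section
/- Let m ≥ 2 and λ ∈ ℤ/m with λ ∉ {0, 1}. Consider the monotone closure operator on subsets of ℤ/m generated by the rule: if x − λ ∈ P and x − λ + 1 ∈ P then x may be added. Then the interval I = {0, 1, ..., ⌈m/2⌉ − 1} (of size ⌈m/2⌉ when m is odd, m/2 when m is even) is a plague: its iterated closure is all of ℤ/m. -/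
/-- Membership in the closure of `I ⊆ ℤ/m` under the rule: if `x − λ ∈ P`
and `x − λ + 1 ∈ P` then `x` may be added. -/
inductive Reach12 {m : ℕ} (lam : ZMod m) (I : Set (ZMod m)) : ZMod m → Prop
  | base (x : ZMod m) (hx : x ∈ I) : Reach12 lam I x
  | step (x : ZMod m) (h1 : Reach12 lam I (x - lam))
      (h2 : Reach12 lam I (x - lam + 1)) : Reach12 lam I x

/-- for `λ ∉ {0,1}`, the interval `{0, 1, …, ⌈m/2⌉ − 1}`
(of size `(m+1)/2` in natural division) is a plague for the rule
"if `x − λ ∈ P` and `x − (λ−1) ∈ P` then add `x`". -/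
theorem interval_plague (m : ℕ) (hm : 2 ≤ m) (lam : ZMod m)
    (h0 : lam ≠ 0) (h1 : lam ≠ 1) (I : Set (ZMod m))
    (hI : I = {x : ZMod m | ∃ k : ℕ, k < (m + 1) / 2 ∧ x = (k : ZMod m)}) :
    ∀ x : ZMod m, Reach12 lam I x := by
  haveI : NeZero m := ⟨by omega⟩
  set n := (m + 1) / 2 with hn
  set L := lam.val with hLdef
  have hlamL : (L : ZMod m) = lam := by
    simp [hLdef, ZMod.natCast_val, ZMod.cast_id]
  have hLm : L < m := lam.val_lt
  have hL0 : L ≠ 0 := by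
    intro h
    exact h0 (by rwa [← ZMod.val_eq_zero])
  have hL1 : L ≠ 1 := by
    intro h
    apply h1
    rw [← hlamL, h, Nat.cast_one]
  have hbase : ∀ k : ℕ, k < n → Reach12 lam I ((k : ZMod m)) := by
    intro k hk
    exact Reach12.base _ (by rw [hI]; exact ⟨k, hk, rfl⟩)
  by_cases hcase : L ≤ n
  · -- small lambda: walk upward
    have key : ∀ k : ℕ, Reach12 lam I ((k : ZMod m)) := by
      intro k
      induction k using Nat.strong_induction_on with
      | _ k ih =>
        by_cases hk : k < n
        · exact hbase k hk
        · push_neg at hk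
          have hLk : L ≤ k := le_trans hcase hk
          have e1 : (k : ZMod m) - lam = ((k - L : ℕ) : ZMod m) := by
            rw [Nat.cast_sub hLk, hlamL]
          have e2 : (k : ZMod m) - lam + 1 = ((k - L + 1 : ℕ) : ZMod m) := by
            rw [Nat.cast_add, Nat.cast_sub hLk, hlamL, Nat.cast_one]
          exact Reach12.step _ (e1 ▸ ih (k - L) (by omega)) (e2 ▸ ih (k - L + 1) (by omega))
    intro x
    have hx : ((x.val : ℕ) : ZMod m) = x := by
      simp [ZMod.natCast_val, ZMod.cast_id]
    exact hx ▸ key x.val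
  · -- large lambda: walk downward
    push_neg at hcase
    set M := m - L with hMdef
    have hM1 : 1 ≤ M := by omega
    have hMn : M < n := by omega
    have hMlam : (M : ZMod m) = - lam := by
      have h : ((M + L : ℕ) : ZMod m) = 0 := by
        have : M + L = m := by omega
        rw [this, ZMod.natCast_self]
      push_cast at h
      rw [← hlamL]
      linear_combination h
    have key : ∀ k : ℕ, Reach12 lam I (((n - 1 : ℕ) : ZMod m) - (k : ZMod m)) := by
      intro k
      induction k using Nat.strong_induction_on with
      | _ k ih =>
        by_cases hk : k < n
        · have e : ((n - 1 : ℕ) : ZMod m) - (k : ZMod m)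
              = ((n - 1 - k : ℕ) : ZMod m) :=
            (Nat.cast_sub (by omega : k ≤ n - 1)).symm
          rw [e]
          exact hbase _ (by omega)
        · push_neg at hk
          apply Reach12.step
          · have e1 : ((n - 1 : ℕ) : ZMod m) - (k : ZMod m) - lam
                = ((n - 1 : ℕ) : ZMod m) - ((k - M : ℕ) : ZMod m) := by
              rw [Nat.cast_sub (by omega : M ≤ k)]
              linear_combination - hMlam
            exact e1 ▸ ih (k - M) (by omega)
          · have e2 : ((n - 1 : ℕ) : ZMod m) - (k : ZMod m) - lam + 1
                = ((n - 1 : ℕ) : ZMod m) - ((k - M - 1 : ℕ) : ZMod m) := by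
              rw [Nat.cast_sub (by omega : 1 ≤ k - M), Nat.cast_sub (by omega : M ≤ k)]
              push_cast
              linear_combination - hMlam
            exact e2 ▸ ih (k - M - 1) (by omega)
    intro x
    have hx : ((n - 1 : ℕ) : ZMod m) - ((((n - 1 : ℕ) : ZMod m) - x).val : ZMod m) = x := by
      rw [ZMod.natCast_val, ZMod.cast_id]
      ring
    exact hx ▸ key _
end
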